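/- Let n ≥ 2 and suppose pretty good state transfer occurs between the end vertices 1 and n of the path P_n. Then for every vertex a ∈ {1,…,n} with a ≠ (n+1)/2, pretty good state transfer occurs between vertices a and n + 1 − a. -/

import Mathlib

open Real Finset

/-- Adjacency matrix of the path `P_n` on vertices `1,…,n` (indexed by `Fin n`),
over the complex numbers: the `(j,k)` entry is `1` iff `|j - k| = 1`. -/
noncomputable def pathAdj (n : ℕ) : Matrix (Fin n) (Fin n) ℂ :=
  Matrix.of fun j k => if j.val + 1 = k.val ∨ k.val + 1 = j.val then 1 else 0

/-- The transition matrix `U(τ) = exp(iτA)` of the quantum walk on `P_n`. -/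
noncomputable def pathU (n : ℕ) (τ : ℝ) : Matrix (Fin n) (Fin n) ℂ :=
  NormedSpace.exp ((Complex.I * (τ : ℂ)) • pathAdj n)

/-- Pretty good state transfer between vertices `a` and `b` of `P_n`
(vertex `a ∈ {1,…,n}` corresponds to index `a - 1 : Fin n`):
for every `ε > 0` there is a time `τ` with `|U(τ)_{a,b}| > 1 - ε`. -/
def PGST (n : ℕ) (a b : Fin n) : Prop :=
  ∀ ε : ℝ, 0 < ε → ∃ τ : ℝ, 1 - ε < ‖pathU n τ a b‖

noncomputable def pathR (n : ℕ) : Matrix (Fin n) (Fin n) ℂ :=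
  Matrix.of fun j k => if j.val + k.val + 1 = n then 1 else 0

lemma pathAdj_conjTranspose (n : ℕ) : (pathAdj n).conjTranspose = pathAdj n := by
  ext j k
  simp only [pathAdj, Matrix.conjTranspose_apply, Matrix.of_apply, apply_ite (star : ℂ → ℂ),
    star_one, star_zero, or_comm]

lemma pathU_star (n : ℕ) (τ : ℝ) :
    star (pathU n τ) = NormedSpace.exp (-((Complex.I * (τ : ℂ)) • pathAdj n)) := by
  rw [pathU, NormedSpace.star_exp]
  congr 1
  rw [Matrix.star_eq_conjTranspose, Matrix.conjTranspose_smul, pathAdj_conjTranspose, ← neg_smul]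
  congr 1
  simp [Complex.ext_iff]

lemma pathU_unitary (n : ℕ) (τ : ℝ) : star (pathU n τ) * pathU n τ = 1 := by
  rw [pathU_star, pathU,
    ← Matrix.exp_add_of_commute (-((Complex.I * (τ : ℂ)) • pathAdj n)) _ (Commute.neg_left (Commute.refl _)),
    neg_add_cancel, NormedSpace.exp_zero]

lemma pathU_colsum (n : ℕ) (τ : ℝ) (k : Fin n) :
    ∑ j, Complex.normSq (pathU n τ j k) = 1 := by
  have h := congrArg (fun M => M k k) (pathU_unitary n τ)
  simp only [Matrix.mul_apply, Matrix.star_apply, Matrix.one_apply_eq] at h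
  have : ((∑ j, Complex.normSq (pathU n τ j k) : ℝ) : ℂ) = ((1:ℝ) : ℂ) := by
    push_cast
    rw [← h]
    exact Finset.sum_congr rfl fun j _ => by
      rw [Complex.normSq_eq_conj_mul_self]; rfl
  exact_mod_cast this

lemma pathU_comm_adj (n : ℕ) (τ : ℝ) : pathU n τ * pathAdj n = pathAdj n * pathU n τ :=
  (((Commute.refl (pathAdj n)).smul_left _).exp_left).eq

lemma mul_pathR (n : ℕ) (M : Matrix (Fin n) (Fin n) ℂ) (j k : Fin n) :
    (M * pathR n) j k = M j ⟨n - 1 - k.val, by omega⟩ := by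
  rw [Matrix.mul_apply, Fintype.sum_eq_single (⟨n - 1 - k.val, by omega⟩ : Fin n)]
  · rw [pathR, Matrix.of_apply, if_pos (by simp only [Fin.val_mk]; omega), mul_one]
  · intro l hl
    rw [pathR, Matrix.of_apply, if_neg, mul_zero]
    intro hc
    exact hl (Fin.ext (by simp only [Fin.val_mk]; omega))

lemma pathR_mul (n : ℕ) (M : Matrix (Fin n) (Fin n) ℂ) (j k : Fin n) :
    (pathR n * M) j k = M ⟨n - 1 - j.val, by omega⟩ k := by
  rw [Matrix.mul_apply, Fintype.sum_eq_single (⟨n - 1 - j.val, by omega⟩ : Fin n)]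
  · rw [pathR, Matrix.of_apply, if_pos (by simp only [Fin.val_mk]; omega), one_mul]
  · intro l hl
    rw [pathR, Matrix.of_apply, if_neg, zero_mul]
    intro hc
    exact hl (Fin.ext (by simp only [Fin.val_mk]; omega))

lemma pathR_comm_adj (n : ℕ) : pathR n * pathAdj n = pathAdj n * pathR n := by
  ext j k
  rw [pathR_mul, mul_pathR]
  have hj := j.isLt
  have hk := k.isLt
  simp only [pathAdj, Matrix.of_apply]
  exact if_congr (by constructor <;> intro h' <;> omega) rfl rfl
noncomputable def wseq (n : ℕ) (w : Fin n → ℂ) : ℕ → (Fin n → ℂ)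
  | 0 => w
  | 1 => (pathAdj n).mulVec w
  | (k+2) => (pathAdj n).mulVec (wseq n w (k+1)) - wseq n w k

lemma sum_ite_val (n : ℕ) (f : Fin n → ℂ) (k : ℕ) (hk : k < n) :
    ∑ l, f l * (if l.val = k then 1 else 0) = f ⟨k, hk⟩ := by
  rw [Fintype.sum_eq_single (⟨k, hk⟩ : Fin n)]
  · simp
  · intro l hl
    rw [if_neg, mul_zero]
    exact fun hc => hl (Fin.ext (by simpa using hc))

lemma adj_col_sum (n : ℕ) (k : Fin n) : ∑ j, ‖pathAdj n j k‖ ≤ 2 := by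
  have h1 : ∀ j : Fin n, ‖pathAdj n j k‖
      = if j.val + 1 = k.val ∨ k.val + 1 = j.val then 1 else 0 := by
    intro j; simp [pathAdj, apply_ite (fun z : ℂ => ‖z‖)]
  simp only [h1]
  rw [Finset.sum_boole]
  have h2 : (Finset.univ.filter
      fun j : Fin n => j.val + 1 = k.val ∨ k.val + 1 = j.val).card ≤ 2 := by
    have hmaps : ∀ j ∈ Finset.univ.filter
        (fun j : Fin n => j.val + 1 = k.val ∨ k.val + 1 = j.val),
        j.val ∈ ({k.val - 1, k.val + 1} : Finset ℕ) := by
      intro j hj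
      simp only [Finset.mem_filter] at hj
      simp only [Finset.mem_insert, Finset.mem_singleton]
      omega
    have h3 := Finset.card_le_card_of_injOn (f := fun j : Fin n => j.val)
      (t := ({k.val - 1, k.val + 1} : Finset ℕ)) hmaps
      (fun x _ y _ hxy => Fin.ext hxy)
    calc _ ≤ ({k.val - 1, k.val + 1} : Finset ℕ).card := h3
    _ ≤ _ := Finset.card_insert_le _ _ |>.trans (by simp)
  exact_mod_cast h2

lemma S_mulVec (n : ℕ) (x : Fin n → ℂ) :
    ∑ j, ‖(pathAdj n).mulVec x j‖ ≤ 2 * ∑ j, ‖x j‖ := by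
  have h1 : ∀ j : Fin n, ‖(pathAdj n).mulVec x j‖
      ≤ ∑ k, ‖pathAdj n j k‖ * ‖x k‖ := by
    intro j
    simp only [Matrix.mulVec, dotProduct]
    refine le_trans (norm_sum_le _ _) (le_of_eq ?_)
    exact Finset.sum_congr rfl fun k _ => norm_mul _ _
  calc ∑ j, ‖(pathAdj n).mulVec x j‖
      ≤ ∑ j, ∑ k, ‖pathAdj n j k‖ * ‖x k‖ :=
        Finset.sum_le_sum fun j _ => h1 j
    _ = ∑ k, (∑ j, ‖pathAdj n j k‖) * ‖x k‖ := by
        rw [Finset.sum_comm]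
        exact Finset.sum_congr rfl fun k _ => (Finset.sum_mul _ _ _).symm
    _ ≤ ∑ k, 2 * ‖x k‖ :=
        Finset.sum_le_sum fun k _ =>
          mul_le_mul_of_nonneg_right (adj_col_sum n k) (norm_nonneg _)
    _ = 2 * ∑ j, ‖x j‖ := (Finset.mul_sum _ _ _).symm

lemma wseq_S_bound (n : ℕ) (w : Fin n → ℂ) (k : ℕ) :
    ∑ j, ‖wseq n w k j‖ ≤ 3 ^ k * ∑ j, ‖w j‖ := by
  have hSw : 0 ≤ ∑ j, ‖w j‖ :=
    Finset.sum_nonneg fun j _ => norm_nonneg _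
  induction k using Nat.strong_induction_on with
  | _ k ih =>
    match k with
    | 0 => simpa [wseq] using le_refl _
    | 1 =>
      refine le_trans (S_mulVec n w) ?_
      nlinarith
    | (k+2) =>
      have h1 : ∑ j, ‖wseq n w (k+2) j‖
          ≤ ∑ j, ‖(pathAdj n).mulVec (wseq n w (k+1)) j‖
            + ∑ j, ‖wseq n w k j‖ := by
        rw [← Finset.sum_add_distrib]
        refine Finset.sum_le_sum fun j _ => ?_
        have : wseq n w (k+2) j
            = (pathAdj n).mulVec (wseq n w (k+1)) j - wseq n w k j := rfl
        rw [this]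
        simpa [sub_eq_add_neg, map_neg] using
          norm_add_le ((pathAdj n).mulVec (wseq n w (k+1)) j) (-(wseq n w k j))
      have h2 := S_mulVec n (wseq n w (k+1))
      have h3 := ih (k+1) (by omega)
      have h4 := ih k (by omega)
      have h5 : (3:ℝ)^(k+2) = 9 * 3^k := by ring
      have h6 : (3:ℝ)^(k+1) = 3 * 3^k := by ring
      nlinarith [pow_nonneg (by norm_num : (0:ℝ) ≤ 3) k]



lemma adj_e1 (n : ℕ) (hn : 2 ≤ n) (l : Fin n) (h0 : 0 < n) :
    pathAdj n l ⟨0, h0⟩ = if l.val = 1 then 1 else 0 := by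
  simp only [pathAdj, Matrix.of_apply, Fin.val_mk]
  exact if_congr (by omega) rfl rfl

lemma adj_split (n : ℕ) (k : ℕ) (h2 : k + 2 < n) (l : Fin n) :
    pathAdj n l ⟨k + 1, by omega⟩
      = (if l.val = k then 1 else 0) + (if l.val = k + 2 then 1 else 0) := by
  simp only [pathAdj, Matrix.of_apply, Fin.val_mk]
  have hl := l.isLt
  split_ifs <;> norm_num <;> omega

lemma col_decomp (n : ℕ) (hn : 2 ≤ n) (B : Matrix (Fin n) (Fin n) ℂ)
    (hcom : pathAdj n * B = B * pathAdj n) (γ : ℂ) (w : Fin n → ℂ)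
    (hbase : ∀ j : Fin n, B j ⟨0, show 0 < n + 0 by omega⟩ = γ * (if j.val = 0 then 1 else 0) + w j) :
    ∀ (k : ℕ) (hk : k < n) (j : Fin n),
      B j ⟨k, hk⟩ = γ * (if j.val = k then 1 else 0) + wseq n w k j := by
  have h0 : 0 < n := by omega
  have hentry : ∀ (m : ℕ) (hm : m < n) (j : Fin n),
      ∑ l, pathAdj n j l * B l ⟨m, hm⟩ = ∑ l, B j l * pathAdj n l ⟨m, hm⟩ := by
    intro m hm j
    have := congrArg (fun M => M j (⟨m, hm⟩ : Fin n)) hcom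
    simpa [Matrix.mul_apply] using this
  intro k
  induction k using Nat.strong_induction_on with
  | _ k ih =>
  match k with
  | 0 =>
    intro hk j
    exact hbase j
  | 1 =>
    intro hk j
    have e1 : ∑ l, B j l * pathAdj n l ⟨0, h0⟩ = B j ⟨1, hk⟩ := by
      have hrw : ∀ l : Fin n, B j l * pathAdj n l ⟨0, h0⟩
          = B j l * (if l.val = 1 then 1 else 0) := fun l => by rw [adj_e1 n hn l h0]
      rw [Finset.sum_congr rfl fun l _ => hrw l]
      exact sum_ite_val n (B j) 1 hk
    have e2 : ∑ l, pathAdj n j l * B l ⟨0, h0⟩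
        = γ * (if j.val = 1 then 1 else 0) + wseq n w 1 j := by
      have hrw : ∀ l : Fin n, pathAdj n j l * B l ⟨0, h0⟩
          = γ * (pathAdj n j l * (if l.val = 0 then 1 else 0))
            + pathAdj n j l * w l := by
        intro l
        rw [hbase l]
        ring
      rw [Finset.sum_congr rfl fun l _ => hrw l, Finset.sum_add_distrib, ← Finset.mul_sum,
        sum_ite_val n (pathAdj n j) 0 h0, adj_e1 n hn j h0]
      rfl
    rw [← e1, ← hentry 0 h0 j, e2]
  | (k+2) =>
    intro hk j
    have hk1 : k + 1 < n := by omega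
    have hkk : k < n := by omega
    have e1 : ∑ l, B j l * pathAdj n l ⟨k + 1, hk1⟩
        = B j ⟨k, hkk⟩ + B j ⟨k + 2, hk⟩ := by
      have hrw : ∀ l : Fin n, B j l * pathAdj n l ⟨k + 1, hk1⟩
          = B j l * (if l.val = k then 1 else 0) + B j l * (if l.val = k + 2 then 1 else 0) := by
        intro l
        rw [adj_split n k hk l]
        ring
      rw [Finset.sum_congr rfl fun l _ => hrw l, Finset.sum_add_distrib,
        sum_ite_val n (B j) k hkk, sum_ite_val n (B j) (k+2) hk]
    have e2 : ∑ l, pathAdj n j l * B l ⟨k + 1, hk1⟩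
        = γ * pathAdj n j ⟨k + 1, hk1⟩ + (pathAdj n).mulVec (wseq n w (k+1)) j := by
      have hrw : ∀ l : Fin n, pathAdj n j l * B l ⟨k + 1, hk1⟩
          = γ * (pathAdj n j l * (if l.val = k + 1 then 1 else 0))
            + pathAdj n j l * (wseq n w (k+1) l) := by
        intro l
        rw [ih (k+1) (by omega) hk1 l]
        ring
      rw [Finset.sum_congr rfl fun l _ => hrw l, Finset.sum_add_distrib, ← Finset.mul_sum,
        sum_ite_val n (pathAdj n j) (k+1) hk1]
      rfl
    have e3 := hentry (k+1) hk1 j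
    rw [e1, e2, adj_split n k hk j] at e3
    have e5 : wseq n w (k+2) j = (pathAdj n).mulVec (wseq n w (k+1)) j - wseq n w k j := rfl
    have e6 := ih k (by omega) hkk j
    rw [e5]
    linear_combination -e3 - e6

lemma key (n : ℕ) (hn : 2 ≤ n) (B : Matrix (Fin n) (Fin n) ℂ)
    (hcom : pathAdj n * B = B * pathAdj n)
    (hcol : ∑ j, Complex.normSq (B j ⟨0, show 0 < n + 0 by omega⟩) = 1)
    (δ : ℝ) (hδ : 0 ≤ δ)
    (h00 : 1 - δ ≤ ‖B ⟨0, show 0 < n + 0 by omega⟩ ⟨0, show 0 < n + 0 by omega⟩‖)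
    (k : ℕ) (hk : k < n) :
    1 - δ - n * 3 ^ k * Real.sqrt (2 * δ) ≤ ‖B ⟨k, hk⟩ ⟨k, hk⟩‖ := by
  have h0 : 0 < n := by omega
  set γ : ℂ := B ⟨0, h0⟩ ⟨0, h0⟩ with hγ
  set w : Fin n → ℂ := fun l => if l.val = 0 then 0 else B l ⟨0, h0⟩ with hw
  have hbase : ∀ j : Fin n, B j ⟨0, h0⟩ = γ * (if j.val = 0 then 1 else 0) + w j := by
    intro j
    by_cases hj : j.val = 0
    · have hj' : j = ⟨0, h0⟩ := Fin.ext hj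
      subst hj'
      simp [hw, hγ]
    · simp [hw, hj]
  -- entrywise bound on w
  have hwj : ∀ j : Fin n, ‖w j‖ ≤ Real.sqrt (2 * δ) := by
    intro j
    by_cases hj : j.val = 0
    · simp only [hw, if_pos hj, norm_zero]
      positivity
    · have hjw : w j = B j ⟨0, h0⟩ := by simp [hw, hj]
      have hmem : j ∈ Finset.univ.erase (⟨0, h0⟩ : Fin n) :=
        Finset.mem_erase.2 ⟨fun hc => hj (by rw [hc]), Finset.mem_univ _⟩
      have h1 : Complex.normSq γ + ∑ l ∈ Finset.univ.erase (⟨0, h0⟩ : Fin n),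
          Complex.normSq (B l ⟨0, h0⟩) = 1 := by
        rw [hγ, Finset.add_sum_erase _ (fun l => Complex.normSq (B l ⟨0, h0⟩))
          (Finset.mem_univ _)]
        exact hcol
      have h2 : Complex.normSq (B j ⟨0, h0⟩)
          ≤ ∑ l ∈ Finset.univ.erase (⟨0, h0⟩ : Fin n), Complex.normSq (B l ⟨0, h0⟩) :=
        Finset.single_le_sum (f := fun l : Fin n => Complex.normSq (B l ⟨0, h0⟩))
          (fun l _ => Complex.normSq_nonneg _) hmem
      have h3 : Complex.normSq γ = ‖γ‖ ^ 2 := (Complex.sq_norm γ).symm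
      have h4 : Complex.normSq (B j ⟨0, h0⟩) ≤ 2 * δ := by
        nlinarith [norm_nonneg γ]
      rw [hjw, Complex.norm_def]
      exact Real.sqrt_le_sqrt h4
  have hSw : ∑ j, ‖w j‖ ≤ n * Real.sqrt (2 * δ) := by
    calc ∑ j, ‖w j‖ ≤ Finset.univ.card • Real.sqrt (2 * δ) :=
          Finset.sum_le_card_nsmul _ _ _ fun j _ => hwj j
      _ = n * Real.sqrt (2 * δ) := by simp [mul_comm]
  have hdec := col_decomp n hn B hcom γ w hbase k hk ⟨k, hk⟩
  rw [if_pos rfl, mul_one] at hdec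
  have htri : ‖γ‖ - ‖wseq n w k ⟨k, hk⟩‖
      ≤ ‖B ⟨k, hk⟩ ⟨k, hk⟩‖ := by
    rw [hdec]
    have := norm_add_le (γ + wseq n w k ⟨k, hk⟩) (-(wseq n w k ⟨k, hk⟩))
    simp only [add_neg_cancel_right, norm_neg] at this
    linarith
  have hsingle : ‖wseq n w k ⟨k, hk⟩‖ ≤ ∑ j, ‖wseq n w k j‖ :=
    Finset.single_le_sum (fun l _ => norm_nonneg _) (Finset.mem_univ _)
  have hWS := wseq_S_bound n w k
  have h3k : (0:ℝ) ≤ 3 ^ k := by positivity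
  have hsq : (0:ℝ) ≤ Real.sqrt (2 * δ) := Real.sqrt_nonneg _
  have hfin : ‖wseq n w k ⟨k, hk⟩‖ ≤ n * 3 ^ k * Real.sqrt (2 * δ) := by
    have : (3:ℝ) ^ k * (n * Real.sqrt (2 * δ)) = n * 3 ^ k * Real.sqrt (2 * δ) := by ring
    nlinarith
  linarith

/-- If pretty good state transfer occurs between the end vertices `1` and `n` of `P_n`, then for
every vertex `a` with `a ≠ (n+1)/2` (equivalently `2a ≠ n + 1`), pretty good state transfer
occurs between vertices `a` and `n + 1 - a`. -/
theorem pgst_ends_implies_pgst_symmetric_pairs (n : ℕ) (hn : 2 ≤ n)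
    (h : PGST n ⟨0, by omega⟩ ⟨n - 1, by omega⟩)
    (a : ℕ) (ha : 1 ≤ a) (ha' : a ≤ n) (hmid : 2 * a ≠ n + 1) :
    PGST n ⟨a - 1, by omega⟩ ⟨n + 1 - a - 1, by omega⟩ := by
  intro ε hε
  have h0 : 0 < n := by omega
  set C : ℝ := n * 3 ^ n + 1 with hC
  have hCpos : 0 < C := by positivity
  set δ : ℝ := min (ε / 4) ((ε / (2 * C)) ^ 2 / 2) with hδdef
  have hδpos : 0 < δ := lt_min (by linarith) (by positivity)
  obtain ⟨τ, hτ⟩ := h δ hδpos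
  refine ⟨τ, ?_⟩
  set B : Matrix (Fin n) (Fin n) ℂ := pathU n τ * pathR n with hB
  have hcom : pathAdj n * B = B * pathAdj n := by
    rw [hB, ← Matrix.mul_assoc, ← pathU_comm_adj n τ, Matrix.mul_assoc, ← pathR_comm_adj n,
      ← Matrix.mul_assoc]
  have hrw : ∀ j : Fin n, B j ⟨0, h0⟩ = pathU n τ j ⟨n - 1, by omega⟩ := by
    intro j
    rw [hB, mul_pathR]
    exact congrArg (pathU n τ j) (Fin.ext (by simp))
  have hcol : ∑ j, Complex.normSq (B j ⟨0, h0⟩) = 1 := by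
    rw [Finset.sum_congr rfl fun j _ => by rw [hrw j]]
    exact pathU_colsum n τ ⟨n - 1, by omega⟩
  have h00 : 1 - δ ≤ ‖B ⟨0, h0⟩ ⟨0, h0⟩‖ := by
    rw [hrw ⟨0, h0⟩]
    exact le_of_lt hτ
  have hstep := key n hn B hcom hcol δ (le_of_lt hδpos) h00 (a - 1) (by omega)
  have hBa : B ⟨a - 1, by omega⟩ ⟨a - 1, by omega⟩
      = pathU n τ ⟨a - 1, by omega⟩ ⟨n + 1 - a - 1, by omega⟩ := by
    rw [hB, mul_pathR]
    exact congrArg (pathU n τ _) (Fin.ext (by simp; omega))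
  rw [hBa] at hstep
  have hδ1 : δ ≤ ε / 4 := min_le_left _ _
  have hδ2 : δ ≤ (ε / (2 * C)) ^ 2 / 2 := min_le_right _ _
  have hs : Real.sqrt (2 * δ) ≤ ε / (2 * C) := by
    rw [show ε / (2 * C) = Real.sqrt ((ε / (2 * C)) ^ 2) from (Real.sqrt_sq (by positivity)).symm]
    apply Real.sqrt_le_sqrt
    linarith
  have hpow : (n : ℝ) * 3 ^ (a - 1) ≤ C := by
    have h1 : (3 : ℝ) ^ (a - 1) ≤ 3 ^ n := pow_le_pow_right₀ (by norm_num) (by omega)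
    have h2 : (0 : ℝ) ≤ (n : ℝ) := Nat.cast_nonneg n
    nlinarith
  have hb : (n : ℝ) * 3 ^ (a - 1) * Real.sqrt (2 * δ) ≤ C * (ε / (2 * C)) :=
    mul_le_mul hpow hs (Real.sqrt_nonneg _) (le_of_lt hCpos)
  have hCε : C * (ε / (2 * C)) = ε / 2 := by
    field_simp
  have : 1 - ε < 1 - δ - n * 3 ^ (a - 1) * Real.sqrt (2 * δ) := by
    rw [hCε] at hb
    linarith
  linarith
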